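/- Let (𝔓, 𝔔) be an interaction system with generative distribution G, and suppose all relevant conditional probabilities are positive. Then the agent's expected utility satisfies E_G[(1/t) log 𝔓(ao_{≤t})] = GU_𝔓 + GU_𝔔 + PU_𝔓, where PU_𝔓 = −(1/t) Σ_{τ=1}^{t} D[𝔔(o_τ|ao_{<τ}a_τ) ‖ 𝔓(o_τ|ao_{<τ}a_τ)] (per-step KL divergences weighted by G), and GU_𝔓, GU_𝔔 are the negative per-step entropy rates of action and observation generation respectively. In particular PU_𝔓 ≤ 0, so E_G[(1/t) log 𝔓(ao_{≤t})] ≤ E_G[(1/t) log G(ao_{≤t})]. -/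

import Mathlib

open Finset


lemma snoc_lt {X : Type*} {n : ℕ} (w : Fin n → X) (x : X) (i : Fin (n+1)) (h : (i:ℕ) < n) :
    (Fin.snoc w x : Fin (n+1) → X) i = w ⟨i, h⟩ := by
  simp [Fin.snoc, h]
  rfl

/-- prefix list of a snoc, below the end, equals prefix list of the base tuple -/
lemma prefix_snoc {X : Type*} {n : ℕ} (w : Fin n → X) (x : X) {m : ℕ} (h : m ≤ n) :
    (List.ofFn fun j : Fin m => (Fin.snoc w x : Fin (n+1) → X) (Fin.castLE (h.trans n.le_succ) j)) =
    List.ofFn fun j : Fin m => w (Fin.castLE h j) := by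
  congr 1
  funext j
  exact snoc_lt w x _ (lt_of_lt_of_le j.isLt h)

lemma prod_snoc {X : Type*} (step : List X → X → ℝ) (n : ℕ) (w : Fin n → X) (x : X) :
    (∏ i : Fin (n+1), step (List.ofFn fun j : Fin i => (Fin.snoc w x : Fin (n+1) → X) (Fin.castLE i.isLt.le j))
        ((Fin.snoc w x : Fin (n+1) → X) i)) =
    (∏ i : Fin n, step (List.ofFn fun j : Fin i => w (Fin.castLE i.isLt.le j)) (w i)) *
      step (List.ofFn w) x := by
  rw [Fin.prod_univ_castSucc]
  congr 1
  · refine Finset.prod_congr rfl fun i _ => ?_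
    rw [Fin.snoc_castSucc]
    congr 1
    exact prefix_snoc w x i.isLt.le
  · rw [Fin.snoc_last]
    congr 1
    have := prefix_snoc w x (le_refl n)
    convert this using 3 <;> rfl

lemma marg {X : Type*} [Fintype X] (step : List X → X → ℝ)
    (hnorm : ∀ l, ∑ x : X, step l x = 1) (s : ℕ) (f : (Fin s → X) → ℝ) :
    ∀ n (h : s ≤ n),
    (∑ v : Fin n → X,
      (∏ i : Fin n, step (List.ofFn fun j : Fin i => v (Fin.castLE i.isLt.le j)) (v i)) *
        f (fun j => v (Fin.castLE h j))) =
    ∑ w : Fin s → X,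
      (∏ i : Fin s, step (List.ofFn fun j : Fin i => w (Fin.castLE i.isLt.le j)) (w i)) * f w := by
  intro n h
  induction n, h using Nat.le_induction with
  | base =>
    refine Finset.sum_congr rfl fun v _ => ?_
    congr 1
  | succ n hn IH =>
    rw [← Equiv.sum_comp (Fin.snocEquiv (fun _ : Fin (n+1) => X)), Fintype.sum_prod_type]
    have key : ∀ (x : X) (w : Fin n → X),
        (∏ i : Fin (n+1), step
            (List.ofFn fun j : Fin i =>
              (Fin.snoc w x : Fin (n+1) → X) (Fin.castLE i.isLt.le j))
            ((Fin.snoc w x : Fin (n+1) → X) i)) *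
          f (fun j => (Fin.snoc w x : Fin (n+1) → X) (Fin.castLE (hn.trans n.le_succ) j)) =
        ((∏ i : Fin n, step (List.ofFn fun j : Fin i => w (Fin.castLE i.isLt.le j)) (w i)) *
          f (fun j => w (Fin.castLE hn j))) * step (List.ofFn w) x := by
      intro x w
      rw [prod_snoc]
      have hr : (fun j => (Fin.snoc w x : Fin (n+1) → X) (Fin.castLE (hn.trans n.le_succ) j)) =
          fun j => w (Fin.castLE hn j) := by
        funext j
        exact snoc_lt w x _ (lt_of_lt_of_le j.isLt hn)
      rw [hr]; ring
    calc (∑ x : X, ∑ w : Fin n → X, (∏ i : Fin (n+1), step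
            (List.ofFn fun j : Fin i =>
              (Fin.snocEquiv (fun _ : Fin (n+1) => X)) (x, w) (Fin.castLE i.isLt.le j))
            ((Fin.snocEquiv (fun _ : Fin (n+1) => X)) (x, w) i)) *
          f (fun j => (Fin.snocEquiv (fun _ : Fin (n+1) => X)) (x, w)
            (Fin.castLE (hn.trans n.le_succ) j)))
        = ∑ w : Fin n → X, ∑ x : X,
          ((∏ i : Fin n, step (List.ofFn fun j : Fin i => w (Fin.castLE i.isLt.le j)) (w i)) *
            f (fun j => w (Fin.castLE hn j))) * step (List.ofFn w) x := by
          rw [Finset.sum_comm]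
          exact Finset.sum_congr rfl fun w _ => Finset.sum_congr rfl fun x _ => key x w
      _ = ∑ w : Fin n → X,
          (∏ i : Fin n, step (List.ofFn fun j : Fin i => w (Fin.castLE i.isLt.le j)) (w i)) *
            f (fun j => w (Fin.castLE hn j)) := by
          refine Finset.sum_congr rfl fun w _ => ?_
          rw [← Finset.mul_sum, hnorm, mul_one]
      _ = _ := IH

lemma decomp {X : Type*} [Fintype X] (g u : List X → X → ℝ)
    (hgnorm : ∀ l, ∑ x : X, g l x = 1) (hu : ∀ l x, 0 < u l x) (t : ℕ) :
    (∑ v : Fin t → X,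
      (∏ i : Fin t, g (List.ofFn fun j : Fin i => v (Fin.castLE i.isLt.le j)) (v i)) *
        Real.log (∏ i : Fin t, u (List.ofFn fun j : Fin i => v (Fin.castLE i.isLt.le j)) (v i))) =
    ∑ τ : Fin t, ∑ w : Fin (τ + 1) → X,
      (∏ i : Fin (τ + 1), g (List.ofFn fun j : Fin i => w (Fin.castLE i.isLt.le j)) (w i)) *
        Real.log (u (List.ofFn fun j : Fin τ => w j.castSucc) (w (Fin.last τ))) := by
  have hlog : ∀ v : Fin t → X,
      Real.log (∏ i : Fin t, u (List.ofFn fun j : Fin i => v (Fin.castLE i.isLt.le j)) (v i)) =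
      ∑ i : Fin t, Real.log (u (List.ofFn fun j : Fin i => v (Fin.castLE i.isLt.le j)) (v i)) :=
    fun v => Real.log_prod (fun i _ => (hu _ _).ne')
  simp_rw [hlog, Finset.mul_sum]
  rw [Finset.sum_comm]
  refine Finset.sum_congr rfl fun τ _ => ?_
  calc (∑ v : Fin t → X,
        (∏ i : Fin t, g (List.ofFn fun j : Fin i => v (Fin.castLE i.isLt.le j)) (v i)) *
          Real.log (u (List.ofFn fun j : Fin τ => v (Fin.castLE τ.isLt.le j)) (v τ)))
      = ∑ v : Fin t → X,
        (∏ i : Fin t, g (List.ofFn fun j : Fin i => v (Fin.castLE i.isLt.le j)) (v i)) *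
          (fun w : Fin (τ + 1) → X => Real.log
            (u (List.ofFn fun j : Fin τ => w j.castSucc) (w (Fin.last τ))))
          (fun j => v (Fin.castLE τ.isLt j)) := by
        refine Finset.sum_congr rfl fun v _ => rfl
    _ = _ := marg g hgnorm (τ + 1)
        (fun w => Real.log (u (List.ofFn fun j : Fin τ => w j.castSucc) (w (Fin.last τ)))) t τ.isLt

lemma gibbs {O : Type*} [Fintype O] (p q : O → ℝ) (hp : ∀ o, 0 < p o) (hq : ∀ o, 0 < q o)
    (hpn : ∑ o : O, p o = 1) (hqn : ∑ o : O, q o = 1) :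
    0 ≤ ∑ o : O, p o * (Real.log (p o) - Real.log (q o)) := by
  have h1 : ∀ o, p o - q o ≤ p o * (Real.log (p o) - Real.log (q o)) := by
    intro o
    have h := Real.log_le_sub_one_of_pos (div_pos (hq o) (hp o))
    rw [Real.log_div (hq o).ne' (hp o).ne'] at h
    have h2 := mul_le_mul_of_nonneg_left h (hp o).le
    have h3 : p o * (q o / p o) = q o := by
      rw [mul_comm]; exact div_mul_cancel₀ _ (hp o).ne'
    nlinarith [h2, h3]
  calc (0:ℝ) = ∑ o : O, (p o - q o) := by rw [Finset.sum_sub_distrib, hpn, hqn]; ring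
    _ ≤ _ := Finset.sum_le_sum fun o _ => h1 o

lemma step_kl_nonneg {A O : Type*} [Fintype A] [Fintype O]
    (pA : List (A × O) → A → ℝ) (pE pO : List (A × O) → A → O → ℝ)
    (hpA : ∀ l a, 0 < pA l a) (hpE : ∀ l a o, 0 < pE l a o) (hpO : ∀ l a o, 0 < pO l a o)
    (hpEnorm : ∀ l a, ∑ o : O, pE l a o = 1) (hpOnorm : ∀ l a, ∑ o : O, pO l a o = 1)
    (n : ℕ) :
    0 ≤ ∑ w : Fin (n + 1) → A × O,
      (∏ i : Fin (n + 1),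
        (pA (List.ofFn fun j : Fin i => w (Fin.castLE i.isLt.le j)) (w i).1 *
          pE (List.ofFn fun j : Fin i => w (Fin.castLE i.isLt.le j)) (w i).1 (w i).2)) *
        (Real.log (pE (List.ofFn fun j : Fin n => w j.castSucc) (w (Fin.last n)).1
            (w (Fin.last n)).2) -
         Real.log (pO (List.ofFn fun j : Fin n => w j.castSucc) (w (Fin.last n)).1
            (w (Fin.last n)).2)) := by
  rw [← Equiv.sum_comp (Fin.snocEquiv (fun _ : Fin (n+1) => A × O)), Fintype.sum_prod_type]
  rw [Finset.sum_comm]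
  refine Finset.sum_nonneg fun w _ => ?_
  set G := ∏ i : Fin n,
      (pA (List.ofFn fun j : Fin i => w (Fin.castLE i.isLt.le j)) (w i).1 *
        pE (List.ofFn fun j : Fin i => w (Fin.castLE i.isLt.le j)) (w i).1 (w i).2) with hG
  have hterm : ∀ x : A × O,
      (∏ i : Fin (n + 1),
        (pA (List.ofFn fun j : Fin i =>
            (Fin.snocEquiv (fun _ : Fin (n+1) => A × O)) (x, w) (Fin.castLE i.isLt.le j))
          ((Fin.snocEquiv (fun _ : Fin (n+1) => A × O)) (x, w) i).1 *
          pE (List.ofFn fun j : Fin i =>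
            (Fin.snocEquiv (fun _ : Fin (n+1) => A × O)) (x, w) (Fin.castLE i.isLt.le j))
          ((Fin.snocEquiv (fun _ : Fin (n+1) => A × O)) (x, w) i).1
          ((Fin.snocEquiv (fun _ : Fin (n+1) => A × O)) (x, w) i).2)) *
        (Real.log (pE (List.ofFn fun j : Fin n =>
            (Fin.snocEquiv (fun _ : Fin (n+1) => A × O)) (x, w) j.castSucc)
            ((Fin.snocEquiv (fun _ : Fin (n+1) => A × O)) (x, w) (Fin.last n)).1
            ((Fin.snocEquiv (fun _ : Fin (n+1) => A × O)) (x, w) (Fin.last n)).2) -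
         Real.log (pO (List.ofFn fun j : Fin n =>
            (Fin.snocEquiv (fun _ : Fin (n+1) => A × O)) (x, w) j.castSucc)
            ((Fin.snocEquiv (fun _ : Fin (n+1) => A × O)) (x, w) (Fin.last n)).1
            ((Fin.snocEquiv (fun _ : Fin (n+1) => A × O)) (x, w) (Fin.last n)).2)) =
      (G * (pA (List.ofFn w) x.1 * pE (List.ofFn w) x.1 x.2)) *
        (Real.log (pE (List.ofFn w) x.1 x.2) - Real.log (pO (List.ofFn w) x.1 x.2)) := by
    intro x
    have hlast : (Fin.snocEquiv (fun _ : Fin (n+1) => A × O)) (x, w) (Fin.last n) = x := by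
      simp [Fin.snocEquiv]
    have hlist : (List.ofFn fun j : Fin n =>
        (Fin.snocEquiv (fun _ : Fin (n+1) => A × O)) (x, w) j.castSucc) = List.ofFn w := by
      congr 1; funext j; simp [Fin.snocEquiv]
    rw [hlast, hlist, hG]
    congr 1
    exact prod_snoc (fun l y => pA l y.1 * pE l y.1 y.2) n w x
  rw [Finset.sum_congr rfl fun x _ => hterm x, Fintype.sum_prod_type]
  have hGnn : 0 ≤ G := Finset.prod_nonneg fun i _ => (mul_pos (hpA _ _) (hpE _ _ _)).le
  refine Finset.sum_nonneg fun a _ => ?_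
  have hre : (∑ o : O, (G * (pA (List.ofFn w) a * pE (List.ofFn w) a o)) *
      (Real.log (pE (List.ofFn w) a o) - Real.log (pO (List.ofFn w) a o))) =
      (G * pA (List.ofFn w) a) * ∑ o : O, pE (List.ofFn w) a o *
        (Real.log (pE (List.ofFn w) a o) - Real.log (pO (List.ofFn w) a o)) := by
    rw [Finset.mul_sum]
    exact Finset.sum_congr rfl fun o _ => by ring
  rw [hre]
  exact mul_nonneg (mul_nonneg hGnn (hpA _ _).le)
    (gibbs _ _ (hpE (List.ofFn w) a) (hpO (List.ofFn w) a)
      (hpEnorm (List.ofFn w) a) (hpOnorm (List.ofFn w) a))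

/-- Corollary 1 (agent part): the agent's expected utility equals
`GU_𝔓 + GU_𝔔 + PU_𝔓`, where `PU_𝔓 ≤ 0` is minus the per-step KL divergence rate from
the environment's to the agent's observation predictions; hence the agent's expected
utility never exceeds that of the generative distribution. -/
theorem expected_utility_agent {A O : Type*} [Fintype A] [Fintype O]
    (pA : List (A × O) → A → ℝ)        -- 𝔓(a_τ | ao_{<τ})
    (pE : List (A × O) → A → O → ℝ)    -- 𝔔(o_τ | ao_{<τ} a_τ)
    (pO : List (A × O) → A → O → ℝ)    -- 𝔓(o_τ | ao_{<τ} a_τ)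
    (hpA : ∀ l a, 0 < pA l a) (hpE : ∀ l a o, 0 < pE l a o) (hpO : ∀ l a o, 0 < pO l a o)
    (hpAnorm : ∀ l, ∑ a : A, pA l a = 1)
    (hpEnorm : ∀ l a, ∑ o : O, pE l a o = 1)
    (hpOnorm : ∀ l a, ∑ o : O, pO l a o = 1)
    (Gp : ∀ n : ℕ, (Fin n → A × O) → ℝ)  -- generative prefix probabilities
    (hGp : ∀ n (v : Fin n → A × O), Gp n v =
      ∏ i : Fin n,
        (pA (List.ofFn fun j : Fin i => v (Fin.castLE i.isLt.le j)) (v i).1 *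
          pE (List.ofFn fun j : Fin i => v (Fin.castLE i.isLt.le j)) (v i).1 (v i).2))
    (Pp : ∀ n : ℕ, (Fin n → A × O) → ℝ)  -- agent prefix probabilities
    (hPp : ∀ n (v : Fin n → A × O), Pp n v =
      ∏ i : Fin n,
        (pA (List.ofFn fun j : Fin i => v (Fin.castLE i.isLt.le j)) (v i).1 *
          pO (List.ofFn fun j : Fin i => v (Fin.castLE i.isLt.le j)) (v i).1 (v i).2))
    (t : ℕ) (ht : 0 < t)
    (GUA GUE PUA : ℝ)
    (hGUA : GUA = -(1 / (t:ℝ)) * ∑ τ : Fin t, -∑ v : Fin (τ + 1) → A × O,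
      Gp (τ + 1) v *
        Real.log (pA (List.ofFn fun j : Fin τ => v j.castSucc) (v (Fin.last τ)).1))
    (hGUE : GUE = -(1 / (t:ℝ)) * ∑ τ : Fin t, -∑ v : Fin (τ + 1) → A × O,
      Gp (τ + 1) v *
        Real.log (pE (List.ofFn fun j : Fin τ => v j.castSucc) (v (Fin.last τ)).1
          (v (Fin.last τ)).2))
    (hPUA : PUA = -(1 / (t:ℝ)) * ∑ τ : Fin t, ∑ v : Fin (τ + 1) → A × O,
      Gp (τ + 1) v *
        Real.log (pE (List.ofFn fun j : Fin τ => v j.castSucc) (v (Fin.last τ)).1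
            (v (Fin.last τ)).2 /
          pO (List.ofFn fun j : Fin τ => v j.castSucc) (v (Fin.last τ)).1
            (v (Fin.last τ)).2)) :
    (1 / (t:ℝ)) * (∑ v : Fin t → A × O, Gp t v * Real.log (Pp t v)) =
        GUA + GUE + PUA ∧
    PUA ≤ 0 ∧
    (1 / (t:ℝ)) * (∑ v : Fin t → A × O, Gp t v * Real.log (Pp t v)) ≤
      (1 / (t:ℝ)) * (∑ v : Fin t → A × O, Gp t v * Real.log (Gp t v)) := by
  have hgnorm : ∀ l : List (A × O), (∑ x : A × O, pA l x.1 * pE l x.1 x.2) = 1 := by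
    intro l
    rw [Fintype.sum_prod_type]
    have h : ∀ a : A, (∑ o : O, pA l a * pE l a o) = pA l a := by
      intro a; rw [← Finset.mul_sum, hpEnorm, mul_one]
    rw [Finset.sum_congr rfl fun a _ => h a]
    exact hpAnorm l
  -- decomposition of the agent's expected log-probability
  have hP : (∑ v : Fin t → A × O, Gp t v * Real.log (Pp t v)) =
      (∑ τ : Fin t, ∑ v : Fin (τ + 1) → A × O, Gp (τ + 1) v *
        Real.log (pA (List.ofFn fun j : Fin τ => v j.castSucc) (v (Fin.last τ)).1)) +
      ∑ τ : Fin t, ∑ v : Fin (τ + 1) → A × O, Gp (τ + 1) v *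
        Real.log (pO (List.ofFn fun j : Fin τ => v j.castSucc) (v (Fin.last τ)).1
          (v (Fin.last τ)).2) := by
    have h1 : (∑ v : Fin t → A × O, Gp t v * Real.log (Pp t v)) =
        ∑ τ : Fin t, ∑ v : Fin (τ + 1) → A × O, Gp (τ + 1) v *
          Real.log (pA (List.ofFn fun j : Fin τ => v j.castSucc) (v (Fin.last τ)).1 *
            pO (List.ofFn fun j : Fin τ => v j.castSucc) (v (Fin.last τ)).1
              (v (Fin.last τ)).2) := by
      simp only [hGp, hPp]
      exact decomp (fun l (x : A × O) => pA l x.1 * pE l x.1 x.2)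
        (fun l (x : A × O) => pA l x.1 * pO l x.1 x.2) hgnorm
        (fun l x => mul_pos (hpA _ _) (hpO _ _ _)) t
    rw [h1, ← Finset.sum_add_distrib]
    refine Finset.sum_congr rfl fun τ _ => ?_
    rw [← Finset.sum_add_distrib]
    refine Finset.sum_congr rfl fun v _ => ?_
    rw [Real.log_mul (hpA _ _).ne' (hpO _ _ _).ne', mul_add]
  -- decomposition of the generative expected log-probability
  have hG2 : (∑ v : Fin t → A × O, Gp t v * Real.log (Gp t v)) =
      (∑ τ : Fin t, ∑ v : Fin (τ + 1) → A × O, Gp (τ + 1) v *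
        Real.log (pA (List.ofFn fun j : Fin τ => v j.castSucc) (v (Fin.last τ)).1)) +
      ∑ τ : Fin t, ∑ v : Fin (τ + 1) → A × O, Gp (τ + 1) v *
        Real.log (pE (List.ofFn fun j : Fin τ => v j.castSucc) (v (Fin.last τ)).1
          (v (Fin.last τ)).2) := by
    have h1 : (∑ v : Fin t → A × O, Gp t v * Real.log (Gp t v)) =
        ∑ τ : Fin t, ∑ v : Fin (τ + 1) → A × O, Gp (τ + 1) v *
          Real.log (pA (List.ofFn fun j : Fin τ => v j.castSucc) (v (Fin.last τ)).1 *
            pE (List.ofFn fun j : Fin τ => v j.castSucc) (v (Fin.last τ)).1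
              (v (Fin.last τ)).2) := by
      simp only [hGp]
      exact decomp (fun l (x : A × O) => pA l x.1 * pE l x.1 x.2)
        (fun l (x : A × O) => pA l x.1 * pE l x.1 x.2) hgnorm
        (fun l x => mul_pos (hpA _ _) (hpE _ _ _)) t
    rw [h1, ← Finset.sum_add_distrib]
    refine Finset.sum_congr rfl fun τ _ => ?_
    rw [← Finset.sum_add_distrib]
    refine Finset.sum_congr rfl fun v _ => ?_
    rw [Real.log_mul (hpA _ _).ne' (hpE _ _ _).ne', mul_add]
  -- PUA in split form
  have hPUA' : PUA = -(1 / (t:ℝ)) *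
      ((∑ τ : Fin t, ∑ v : Fin (τ + 1) → A × O, Gp (τ + 1) v *
        Real.log (pE (List.ofFn fun j : Fin τ => v j.castSucc) (v (Fin.last τ)).1
          (v (Fin.last τ)).2)) -
       ∑ τ : Fin t, ∑ v : Fin (τ + 1) → A × O, Gp (τ + 1) v *
        Real.log (pO (List.ofFn fun j : Fin τ => v j.castSucc) (v (Fin.last τ)).1
          (v (Fin.last τ)).2)) := by
    rw [hPUA]
    congr 1
    rw [← Finset.sum_sub_distrib]
    refine Finset.sum_congr rfl fun τ _ => ?_
    rw [← Finset.sum_sub_distrib]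
    refine Finset.sum_congr rfl fun v _ => ?_
    rw [Real.log_div (hpE _ _ _).ne' (hpO _ _ _).ne', mul_sub]
  -- nonnegativity of the total KL divergence
  have hKL : (0:ℝ) ≤ (∑ τ : Fin t, ∑ v : Fin (τ + 1) → A × O, Gp (τ + 1) v *
        Real.log (pE (List.ofFn fun j : Fin τ => v j.castSucc) (v (Fin.last τ)).1
          (v (Fin.last τ)).2)) -
       ∑ τ : Fin t, ∑ v : Fin (τ + 1) → A × O, Gp (τ + 1) v *
        Real.log (pO (List.ofFn fun j : Fin τ => v j.castSucc) (v (Fin.last τ)).1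
          (v (Fin.last τ)).2) := by
    rw [← Finset.sum_sub_distrib]
    refine Finset.sum_nonneg fun τ _ => ?_
    rw [← Finset.sum_sub_distrib]
    have h1 : (∑ v : Fin (τ + 1) → A × O,
        (Gp (τ + 1) v *
          Real.log (pE (List.ofFn fun j : Fin τ => v j.castSucc) (v (Fin.last τ)).1
            (v (Fin.last τ)).2) -
         Gp (τ + 1) v *
          Real.log (pO (List.ofFn fun j : Fin τ => v j.castSucc) (v (Fin.last τ)).1
            (v (Fin.last τ)).2))) =
        ∑ v : Fin (τ + 1) → A × O, Gp (τ + 1) v *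
          (Real.log (pE (List.ofFn fun j : Fin τ => v j.castSucc) (v (Fin.last τ)).1
            (v (Fin.last τ)).2) -
           Real.log (pO (List.ofFn fun j : Fin τ => v j.castSucc) (v (Fin.last τ)).1
            (v (Fin.last τ)).2)) :=
      Finset.sum_congr rfl fun v _ => (mul_sub _ _ _).symm
    rw [h1]
    simp only [hGp]
    exact step_kl_nonneg pA pE pO hpA hpE hpO hpEnorm hpOnorm τ
  have h1t : (0:ℝ) ≤ 1 / (t:ℝ) := by positivity
  have hGUA' : GUA = (1 / (t:ℝ)) *
      ∑ τ : Fin t, ∑ v : Fin (τ + 1) → A × O, Gp (τ + 1) v *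
        Real.log (pA (List.ofFn fun j : Fin τ => v j.castSucc) (v (Fin.last τ)).1) := by
    rw [hGUA, Finset.sum_neg_distrib]; ring
  have hGUE' : GUE = (1 / (t:ℝ)) *
      ∑ τ : Fin t, ∑ v : Fin (τ + 1) → A × O, Gp (τ + 1) v *
        Real.log (pE (List.ofFn fun j : Fin τ => v j.castSucc) (v (Fin.last τ)).1
          (v (Fin.last τ)).2) := by
    rw [hGUE, Finset.sum_neg_distrib]; ring
  refine ⟨?_, ?_, ?_⟩
  · rw [hP, hGUA', hGUE', hPUA']; ring
  · rw [hPUA']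
    nlinarith [mul_nonneg h1t hKL]
  · rw [hP, hG2]
    nlinarith [mul_nonneg h1t hKL]
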